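/- For any graph G=(V,E) with V a finite subset of the positive integers, and for each j with 0≤j≤|E| and each composition α of |V|, the coefficient of x_1^{α_1}⋯x_m^{α_m} t^j in X_G(x,t) equals the coefficient of x_m^{α_1} x_{m-1}^{α_2} ⋯ x_1^{α_m} t^{|E|−j} in X_G(x,t). -/

import Mathlib

/-- A graph on a finite set of positive integers, with edges stored as ordered
pairs `(i, j)` with `i < j`. -/
structure FinGraph where
  V : Finset ℕ
  E : Finset (ℕ × ℕ)
  mem_fst : ∀ e ∈ E, e.1 ∈ V
  mem_snd : ∀ e ∈ E, e.2 ∈ V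
  fst_lt_snd : ∀ e ∈ E, e.1 < e.2
  pos : ∀ v ∈ V, 0 < v

/-- A proper coloring of `G` by positive integers (set to `0` off the vertex set). -/
def IsProperColoring (G : FinGraph) (κ : ℕ → ℕ) : Prop :=
  (∀ v ∈ G.V, 0 < κ v) ∧ (∀ v, v ∉ G.V → κ v = 0) ∧ ∀ e ∈ G.E, κ e.1 ≠ κ e.2

/-- `asc κ`: the number of edges `{i,j}` with `i < j` and `κ i < κ j`. -/
def ascNum (G : FinGraph) (κ : ℕ → ℕ) : ℕ :=
  (G.E.filter fun e => κ e.1 < κ e.2).card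

/-- The monomial `x_κ = ∏_{v ∈ V} x_{κ v}`, recorded as an exponent vector. -/
noncomputable def xmonom (G : FinGraph) (κ : ℕ → ℕ) : ℕ →₀ ℕ :=
  ∑ v ∈ G.V, Finsupp.single (κ v) 1

/-- The chromatic quasisymmetric function `X_G(x,t)`, as a formal power series in
the variables `x_1, x_2, …` whose coefficients are polynomials in `t`. -/
noncomputable def XG (G : FinGraph) : MvPowerSeries ℕ (Polynomial ℚ) :=
  fun d => ∑ᶠ κ ∈ {κ : ℕ → ℕ | IsProperColoring G κ ∧ xmonom G κ = d},
    (Polynomial.X : Polynomial ℚ) ^ ascNum G κ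

/-- `[k]_t = 1 + t + ⋯ + t^(k-1)`. -/
noncomputable def tnum (R : Type*) [CommSemiring R] (k : ℕ) : Polynomial R :=
  ∑ j ∈ Finset.range k, Polynomial.X ^ j


namespace PalAux

open Finset

/-- The reversal of a coloring: `v ↦ m + 1 - κ v` on `V`, `0` elsewhere. -/
def rev (G : FinGraph) (m : ℕ) (κ : ℕ → ℕ) : ℕ → ℕ :=
  fun v => if v ∈ G.V then m + 1 - κ v else 0

lemma xmonom_apply (G : FinGraph) (κ : ℕ → ℕ) (c : ℕ) :
    (xmonom G κ) c = (G.V.filter fun v => κ v = c).card := by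
  classical
  rw [xmonom, Finsupp.finset_sum_apply, Finset.card_filter]
  refine Finset.sum_congr rfl fun v _ => ?_
  rw [Finsupp.single_apply]

lemma sum_single_apply (s : Finset ℕ) (g f : ℕ → ℕ) (c : ℕ) :
    (∑ i ∈ s, Finsupp.single (g i) (f i)) c = ∑ i ∈ s, if g i = c then f i else 0 := by
  classical
  simp [Finsupp.finset_sum_apply, Finsupp.single_apply]

lemma d1_apply (m : ℕ) (α : ℕ → ℕ) (c : ℕ) :
    (∑ i ∈ Finset.Icc 1 m, Finsupp.single i (α i)) c
      = if c ∈ Finset.Icc 1 m then α c else 0 := by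
  classical
  rw [sum_single_apply]
  by_cases h : c ∈ Finset.Icc 1 m
  · rw [if_pos h, Finset.sum_eq_single_of_mem c h (fun i _ hne => if_neg hne), if_pos rfl]
  · rw [if_neg h, Finset.sum_eq_zero]
    intro i hi
    rw [if_neg]
    rintro rfl
    exact h hi

lemma d2_apply (m : ℕ) (α : ℕ → ℕ) (c : ℕ) :
    (∑ i ∈ Finset.Icc 1 m, Finsupp.single (m + 1 - i) (α i)) c
      = if c ∈ Finset.Icc 1 m then α (m + 1 - c) else 0 := by
  classical
  rw [sum_single_apply]
  by_cases h : c ∈ Finset.Icc 1 m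
  · simp only [Finset.mem_Icc] at h
    rw [if_pos (Finset.mem_Icc.2 h)]
    rw [Finset.sum_eq_single_of_mem (m + 1 - c) (Finset.mem_Icc.2 (by omega))]
    · rw [if_pos (by omega)]
    · intro i hi hne
      simp only [Finset.mem_Icc] at hi
      rw [if_neg (by omega)]
  · rw [if_neg h, Finset.sum_eq_zero]
    intro i hi
    simp only [Finset.mem_Icc] at hi
    simp only [Finset.mem_Icc] at h
    rw [if_neg (by omega)]

lemma colors_mem (G : FinGraph) (m : ℕ) {κ : ℕ → ℕ}
    (h0 : ∀ c, c ∉ Finset.Icc 1 m → (xmonom G κ) c = 0) :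
    ∀ v ∈ G.V, κ v ∈ Finset.Icc 1 m := by
  intro v hv
  by_contra hc
  have h := h0 _ hc
  rw [xmonom_apply] at h
  have hmem : v ∈ G.V.filter (fun w => κ w = κ v) := Finset.mem_filter.2 ⟨hv, rfl⟩
  rw [Finset.card_eq_zero] at h
  rw [h] at hmem
  exact absurd hmem (Finset.notMem_empty v)

lemma rev_mem_Icc (G : FinGraph) (m : ℕ) {κ : ℕ → ℕ}
    (hmem : ∀ v ∈ G.V, κ v ∈ Finset.Icc 1 m) :
    ∀ v ∈ G.V, rev G m κ v ∈ Finset.Icc 1 m := by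
  intro v hv
  have := Finset.mem_Icc.1 (hmem v hv)
  simp only [rev, if_pos hv, Finset.mem_Icc]
  omega

lemma rev_proper (G : FinGraph) (m : ℕ) {κ : ℕ → ℕ} (hp : IsProperColoring G κ)
    (hmem : ∀ v ∈ G.V, κ v ∈ Finset.Icc 1 m) : IsProperColoring G (rev G m κ) := by
  refine ⟨?_, ?_, ?_⟩
  · intro v hv
    have := Finset.mem_Icc.1 (hmem v hv)
    simp only [rev, if_pos hv]
    omega
  · intro v hv
    simp [rev, hv]
  · intro e he
    have h1 := Finset.mem_Icc.1 (hmem e.1 (G.mem_fst e he))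
    have h2 := Finset.mem_Icc.1 (hmem e.2 (G.mem_snd e he))
    have hne := hp.2.2 e he
    simp only [rev, if_pos (G.mem_fst e he), if_pos (G.mem_snd e he)]
    omega

lemma rev_rev (G : FinGraph) (m : ℕ) {κ : ℕ → ℕ} (hp : IsProperColoring G κ)
    (hmem : ∀ v ∈ G.V, κ v ∈ Finset.Icc 1 m) : rev G m (rev G m κ) = κ := by
  funext v
  by_cases hv : v ∈ G.V
  · have := Finset.mem_Icc.1 (hmem v hv)
    simp only [rev, if_pos hv]
    omega
  · simp [rev, hv, hp.2.1 v hv]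

lemma xmonom_rev_apply (G : FinGraph) (m : ℕ) {κ : ℕ → ℕ}
    (hmem : ∀ v ∈ G.V, κ v ∈ Finset.Icc 1 m) (c : ℕ) :
    (xmonom G (rev G m κ)) c
      = if c ∈ Finset.Icc 1 m then (xmonom G κ) (m + 1 - c) else 0 := by
  classical
  rw [xmonom_apply]
  by_cases h : c ∈ Finset.Icc 1 m
  · simp only [Finset.mem_Icc] at h
    rw [if_pos (Finset.mem_Icc.2 h), xmonom_apply]
    congr 1
    apply Finset.filter_congr
    intro v hv
    have := Finset.mem_Icc.1 (hmem v hv)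
    simp only [rev, if_pos hv]
    constructor <;> intro <;> omega
  · rw [if_neg h]
    simp only [Finset.mem_Icc, not_and_or, not_le] at h
    rw [Finset.card_eq_zero, Finset.filter_eq_empty_iff]
    intro v hv
    have := Finset.mem_Icc.1 (hmem v hv)
    simp only [rev, if_pos hv]
    omega

lemma asc_rev (G : FinGraph) (m : ℕ) {κ : ℕ → ℕ} (hp : IsProperColoring G κ)
    (hmem : ∀ v ∈ G.V, κ v ∈ Finset.Icc 1 m) :
    ascNum G (rev G m κ) = G.E.card - ascNum G κ := by
  classical
  unfold ascNum
  have heq : G.E.filter (fun e => rev G m κ e.1 < rev G m κ e.2)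
      = G.E.filter (fun e => ¬ κ e.1 < κ e.2) := by
    apply Finset.filter_congr
    intro e he
    have h1 := Finset.mem_Icc.1 (hmem e.1 (G.mem_fst e he))
    have h2 := Finset.mem_Icc.1 (hmem e.2 (G.mem_snd e he))
    have hne := hp.2.2 e he
    simp only [rev, if_pos (G.mem_fst e he), if_pos (G.mem_snd e he)]
    constructor <;> intro <;> omega
  rw [heq, Finset.filter_not, Finset.card_sdiff_of_subset (Finset.filter_subset _ _)]

lemma asc_le (G : FinGraph) (κ : ℕ → ℕ) : ascNum G κ ≤ G.E.card :=
  Finset.card_filter_le _ _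

lemma colorings_finite (G : FinGraph) (m : ℕ) (d : ℕ →₀ ℕ)
    (hd : ∀ c, c ∉ Finset.Icc 1 m → d c = 0) :
    {κ : ℕ → ℕ | IsProperColoring G κ ∧ xmonom G κ = d}.Finite := by
  classical
  apply Set.Finite.subset (Set.finite_range
    (fun f : (G.V → Fin (m + 1)) => fun v => if h : v ∈ G.V then (f ⟨v, h⟩ : ℕ) else 0))
  rintro κ ⟨hp, hx⟩
  have hmem : ∀ v ∈ G.V, κ v ∈ Finset.Icc 1 m :=
    colors_mem G m (fun c hc => by rw [hx]; exact hd c hc)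
  refine ⟨fun v => ⟨κ v, ?_⟩, ?_⟩
  · have := Finset.mem_Icc.1 (hmem v v.2)
    omega
  · funext v
    by_cases hv : v ∈ G.V
    · simp [hv]
    · simp [hv, hp.2.1 v hv]

end PalAux


/-- For any graph `G`, for `0 ≤ j ≤ |E|` and any composition `α = (α_1,…,α_m)` of `|V|`,
the coefficient of `x_1^{α_1} ⋯ x_m^{α_m} t^j` in `X_G(x,t)` equals the coefficient of
`x_m^{α_1} x_{m-1}^{α_2} ⋯ x_1^{α_m} t^{|E|-j}`. -/
theorem coeff_reverse_palindromic (G : FinGraph) (m : ℕ) (α : ℕ → ℕ)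
    (hα : ∀ i ∈ Finset.Icc 1 m, 0 < α i)
    (hsum : ∑ i ∈ Finset.Icc 1 m, α i = G.V.card)
    (j : ℕ) (hj : j ≤ G.E.card) :
    (MvPowerSeries.coeff (R := Polynomial ℚ) (∑ i ∈ Finset.Icc 1 m, Finsupp.single i (α i))
        (XG G)).coeff j
      = (MvPowerSeries.coeff (R := Polynomial ℚ)
          (∑ i ∈ Finset.Icc 1 m, Finsupp.single (m + 1 - i) (α i)) (XG G)).coeff
            (G.E.card - j) := by
  classical
  set d1 : ℕ →₀ ℕ := ∑ i ∈ Finset.Icc 1 m, Finsupp.single i (α i) with hd1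
  set d2 : ℕ →₀ ℕ := ∑ i ∈ Finset.Icc 1 m, Finsupp.single (m + 1 - i) (α i) with hd2
  have hd1a : ∀ c, d1 c = if c ∈ Finset.Icc 1 m then α c else 0 := fun c =>
    PalAux.d1_apply m α c
  have hd2a : ∀ c, d2 c = if c ∈ Finset.Icc 1 m then α (m + 1 - c) else 0 := fun c =>
    PalAux.d2_apply m α c
  have hd1z : ∀ c, c ∉ Finset.Icc 1 m → d1 c = 0 := fun c hc => by
    rw [hd1a, if_neg hc]
  have hd2z : ∀ c, c ∉ Finset.Icc 1 m → d2 c = 0 := fun c hc => by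
    rw [hd2a, if_neg hc]
  have hfin1 := PalAux.colorings_finite G m d1 hd1z
  have hfin2 := PalAux.colorings_finite G m d2 hd2z
  have hXG : ∀ (d : ℕ →₀ ℕ)
      (hf : Set.Finite {κ : ℕ → ℕ | IsProperColoring G κ ∧ xmonom G κ = d}),
      MvPowerSeries.coeff (R := Polynomial ℚ) d (XG G)
        = ∑ κ ∈ hf.toFinset, (Polynomial.X : Polynomial ℚ) ^ ascNum G κ := by
    intro d hf
    have : MvPowerSeries.coeff (R := Polynomial ℚ) d (XG G) = XG G d := rfl
    rw [this, XG, finsum_mem_eq_finite_toFinset_sum _ hf]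
  rw [hXG d1 hfin1, hXG d2 hfin2, Polynomial.finset_sum_coeff, Polynomial.finset_sum_coeff]
  -- properties of members of the first set
  have hmem1 : ∀ κ ∈ hfin1.toFinset, IsProperColoring G κ ∧ xmonom G κ = d1 := by
    intro κ hκ; exact hfin1.mem_toFinset.1 hκ
  have hmem2 : ∀ κ ∈ hfin2.toFinset, IsProperColoring G κ ∧ xmonom G κ = d2 := by
    intro κ hκ; exact hfin2.mem_toFinset.1 hκ
  have hIcc1 : ∀ κ, IsProperColoring G κ → xmonom G κ = d1 →
      ∀ v ∈ G.V, κ v ∈ Finset.Icc 1 m := by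
    intro κ hp hx
    exact PalAux.colors_mem G m (fun c hc => by rw [hx]; exact hd1z c hc)
  have hIcc2 : ∀ κ, IsProperColoring G κ → xmonom G κ = d2 →
      ∀ v ∈ G.V, κ v ∈ Finset.Icc 1 m := by
    intro κ hp hx
    exact PalAux.colors_mem G m (fun c hc => by rw [hx]; exact hd2z c hc)
  refine Finset.sum_nbij' (fun κ => PalAux.rev G m κ) (fun κ => PalAux.rev G m κ)
    ?_ ?_ ?_ ?_ ?_
  · -- maps T1 → T2
    intro κ hκ
    obtain ⟨hp, hx⟩ := hmem1 κ hκ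
    have hIcc := hIcc1 κ hp hx
    rw [hfin2.mem_toFinset]
    refine ⟨PalAux.rev_proper G m hp hIcc, ?_⟩
    ext c
    rw [PalAux.xmonom_rev_apply G m hIcc c, hd2a c]
    by_cases h : c ∈ Finset.Icc 1 m
    · have h' := Finset.mem_Icc.1 h
      rw [if_pos h, if_pos h, hx, hd1a, if_pos (Finset.mem_Icc.2 (by omega))]
    · rw [if_neg h, if_neg h]
  · -- maps T2 → T1
    intro κ hκ
    obtain ⟨hp, hx⟩ := hmem2 κ hκ
    have hIcc := hIcc2 κ hp hx
    rw [hfin1.mem_toFinset]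
    refine ⟨PalAux.rev_proper G m hp hIcc, ?_⟩
    ext c
    rw [PalAux.xmonom_rev_apply G m hIcc c, hd1a c]
    by_cases h : c ∈ Finset.Icc 1 m
    · have h' := Finset.mem_Icc.1 h
      rw [if_pos h, if_pos h, hx, hd2a,
        if_pos (Finset.mem_Icc.2 (by omega : 1 ≤ m + 1 - c ∧ m + 1 - c ≤ m))]
      congr 1
      omega
    · rw [if_neg h, if_neg h]
  · -- left inverse
    intro κ hκ
    obtain ⟨hp, hx⟩ := hmem1 κ hκ
    exact PalAux.rev_rev G m hp (hIcc1 κ hp hx)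
  · -- right inverse
    intro κ hκ
    obtain ⟨hp, hx⟩ := hmem2 κ hκ
    exact PalAux.rev_rev G m hp (hIcc2 κ hp hx)
  · -- summands agree
    intro κ hκ
    obtain ⟨hp, hx⟩ := hmem1 κ hκ
    have hIcc := hIcc1 κ hp hx
    rw [Polynomial.coeff_X_pow, Polynomial.coeff_X_pow, PalAux.asc_rev G m hp hIcc]
    have hle := PalAux.asc_le G κ
    have hiff : (j = ascNum G κ) ↔ (G.E.card - j = G.E.card - ascNum G κ) := by omega
    exact if_congr hiff rfl rfl
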